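/- For every integer n ≥ 1, (2n+1)·C(2n, n) ≤ 6^n, with equality if and only if n = 1. -/

import Mathlib

open Pointwise Matrix

/-- Ambient space `ℝ^d`. -/
abbrev E (d : ℕ) := Fin d → ℝ

/-- A point of the lattice `M ≅ ℤ^d`. -/
def IsLatticePt {d : ℕ} (x : E d) : Prop := ∀ i, ∃ n : ℤ, x i = (n : ℝ)

/-- The standard pairing between `N_ℝ` and `M_ℝ`. -/
def dot {d : ℕ} (x y : E d) : ℝ := ∑ i, x i * y i

/-- The dual (polar) polytope `P* = {x : ⟨x,y⟩ ≥ -1 ∀ y ∈ P}`. -/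
def polarDual {d : ℕ} (P : Set (E d)) : Set (E d) := {x | ∀ y ∈ P, -1 ≤ dot x y}

/-- A lattice polytope: convex hull of finitely many lattice points. -/
def IsLatticePolytope {d : ℕ} (P : Set (E d)) : Prop :=
  ∃ S : Finset (E d), (∀ x ∈ S, IsLatticePt x) ∧ P = convexHull ℝ (S : Set (E d))

/-- A reflexive polytope: a lattice polytope with `0` in its interior whose polar dual is
again a lattice polytope (i.e. the hull of its lattice points). -/
def IsReflexive {d : ℕ} (P : Set (E d)) : Prop :=
  IsLatticePolytope P ∧ 0 ∈ interior P ∧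
    polarDual P = convexHull ℝ {x | x ∈ polarDual P ∧ IsLatticePt x}

/-- A facet: a nonempty exposed face of dimension `d - 1`. -/
def IsFacet {d : ℕ} (P F : Set (E d)) : Prop :=
  IsExposed ℝ P F ∧ F.Nonempty ∧
    Module.finrank ℝ (affineSpan ℝ F).direction = d - 1

/-- Simplicial polytope: every facet is a simplex (hull of `d` affinely independent points). -/
def IsSimplicial {d : ℕ} (P : Set (E d)) : Prop :=
  ∀ F, IsFacet P F → ∃ v : Fin d → E d,
    AffineIndependent ℝ v ∧ F = convexHull ℝ (Set.range v)

/-- Pseudo-symmetric: some facet `F` has `-F` also a facet. -/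
def IsPseudoSymmetric {d : ℕ} (P : Set (E d)) : Prop :=
  ∃ F, IsFacet P F ∧ IsFacet P (-F)

/-- Application of an integer matrix to a point of `ℝ^d`. -/
def applyU {d : ℕ} (U : Matrix (Fin d) (Fin d) ℤ) (x : E d) : E d :=
  (U.map (Int.cast : ℤ → ℝ)) *ᵥ x

/-- Wirth matrix: block form `[[2·Id_f, 0], [C, Id_{d-f}]]` with `C` a `{0,1}`-matrix
each of whose columns has an odd number of `1`'s. -/
def IsWirth {d : ℕ} (A : Matrix (Fin d) (Fin d) ℤ) : Prop :=
  ∃ f : ℕ, f < d ∧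
    (∀ i j : Fin d, (i : ℕ) < f → (j : ℕ) < f → A i j = if i = j then 2 else 0) ∧
    (∀ i j : Fin d, (i : ℕ) < f → f ≤ (j : ℕ) → A i j = 0) ∧
    (∀ i j : Fin d, f ≤ (i : ℕ) → (j : ℕ) < f → A i j = 0 ∨ A i j = 1) ∧
    (∀ i j : Fin d, f ≤ (i : ℕ) → f ≤ (j : ℕ) → A i j = if i = j then 1 else 0) ∧
    (∀ j : Fin d, (j : ℕ) < f →
      Odd (Finset.univ.filter (fun i : Fin d => f ≤ (i : ℕ) ∧ A i j = 1)).card)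


lemma delPezzo_aux : ∀ n, 2 ≤ n → (2 * n + 1) * Nat.centralBinom n < 6 ^ n := by
  intro n hn
  induction n with
  | zero => omega
  | succ m ih =>
    rcases Nat.lt_or_ge m 2 with h | h
    · interval_cases m
      · omega
      · decide
    · have ihm := ih h
      have key := Nat.succ_mul_centralBinom_succ m
      have hmain : (m + 1) * ((2 * (m + 1) + 1) * Nat.centralBinom (m + 1))
          < (m + 1) * 6 ^ (m + 1) := by
        have h6 : (6:ℕ) ^ (m+1) = 6 * 6 ^ m := by ring
        have e1 : (m + 1) * ((2 * (m + 1) + 1) * Nat.centralBinom (m + 1))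
            = (2 * m + 3) * (2 * (2 * m + 1) * Nat.centralBinom m) := by
          calc (m + 1) * ((2 * (m + 1) + 1) * Nat.centralBinom (m + 1))
              = (2 * m + 3) * ((m + 1) * Nat.centralBinom (m + 1)) := by ring
            _ = (2 * m + 3) * (2 * (2 * m + 1) * Nat.centralBinom m) := by rw [key]
        rw [e1, h6]
        nlinarith [mul_lt_mul_of_pos_left ihm (show 0 < 2 * (2 * m + 3) by omega), (show 0 < 6 ^ m by positivity)]
      exact Nat.lt_of_mul_lt_mul_left hmain

theorem delPezzo_facets_le_six_pow (n : ℕ) (hn : 1 ≤ n) :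
    (2 * n + 1) * Nat.choose (2 * n) n ≤ 6 ^ n ∧
      ((2 * n + 1) * Nat.choose (2 * n) n = 6 ^ n ↔ n = 1) := by
  have hc : Nat.choose (2 * n) n = Nat.centralBinom n := rfl
  rw [hc]
  rcases eq_or_lt_of_le hn with h1 | h2
  · subst_vars
    simp [Nat.centralBinom]
  · have := delPezzo_aux n h2
    constructor
    · omega
    · omega
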